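/- Let n > 3 be odd, let k be an integer with 0 ≤ k ≤ (n−1)/2, and let M ∈ {0,…,(n−3)/2}. Define f(x) = −x/tan((2M+1)θ_n) + r_n cos θ_n / sin((2M+1)θ_n). For every p ∈ [0,1] and all ω⁰, ω¹ ∈ Ω_n such that the first coordinate x of pω⁰ + (1−p)ω¹ lies in [r_n cos((2M+2)θ_n), r_n cos(2Mθ_n)], the quantity S₁ = p⟨Q₁⁰, ω⁰⟩ + (1−p)⟨Q₁¹, ω¹⟩ satisfies 1/2 − R_n r_n sin(kθ_n) f(x) ≤ S₁ ≤ 1/2 + R_n r_n sin(kθ_n) f(x). -/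

import Mathlib

noncomputable section

/-- Standard inner product on `ℝ³`. -/
def dot3 (v w : Fin 3 → ℝ) : ℝ := ∑ i, v i * w i

/-- The angle `θ_n = π / n`. -/
def thetaN (n : ℕ) : ℝ := Real.pi / n

/-- `r_n = (cos θ_n)^{-1/2}`. -/
def rN (n : ℕ) : ℝ := Real.sqrt (Real.cos (thetaN n))⁻¹

/-- `R_n = 1 / (1 + r_n²)`. -/
def RN (n : ℕ) : ℝ := 1 / (1 + rN n ^ 2)

/-- The pure states `ω_n(i)` of the regular polygon theory. -/
def omegaN (n i : ℕ) : Fin 3 → ℝ :=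
  ![rN n * Real.cos (2 * (i : ℝ) * thetaN n), rN n * Real.sin (2 * (i : ℝ) * thetaN n), 1]

/-- The state space `Ω_n`, the convex hull of the pure states. -/
def OmegaN (n : ℕ) : Set (Fin 3 → ℝ) :=
  convexHull ℝ {v | ∃ i < n, v = omegaN n i}

/-- The unit effect `u = (0,0,1)`. -/
def uEff : Fin 3 → ℝ := ![0, 0, 1]

/-- The pure effects `e_n(i)` (separate formulas for even and odd `n`). -/
def eN (n i : ℕ) : Fin 3 → ℝ :=
  if Even n then
    (1 / 2 : ℝ) • ![rN n * Real.cos ((2 * (i : ℝ) + 1) * thetaN n),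
                    rN n * Real.sin ((2 * (i : ℝ) + 1) * thetaN n), 1]
  else
    RN n • ![rN n * Real.cos (2 * (i : ℝ) * thetaN n),
             rN n * Real.sin (2 * (i : ℝ) * thetaN n), 1]

/-- The complementary effect `ē_n(i) = u - e_n(i)`. -/
def eBarN (n i : ℕ) : Fin 3 → ℝ := uEff - eN n i

/-- The effect space `E_n`. -/
def EffN (n : ℕ) : Set (Fin 3 → ℝ) :=
  {f | ∀ ω ∈ OmegaN n, dot3 f ω ∈ Set.Icc (0 : ℝ) 1}

/-- The positive cone `V_{n+}` generated by the state space. -/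
def VposN (n : ℕ) : Set (Fin 3 → ℝ) :=
  {x | ∃ c : ℝ, 0 ≤ c ∧ ∃ ω ∈ OmegaN n, x = c • ω}

/-- The dual cone `V*_{n+}` generated by the effect space. -/
def VdualN (n : ℕ) : Set (Fin 3 → ℝ) :=
  {x | ∃ c : ℝ, 0 ≤ c ∧ ∃ f ∈ EffN n, x = c • f}

/-- A state of `Ω_n ⊗_max Ω_n`, identified with a normalized cone-preserving linear map. -/
def IsState (n : ℕ) (η : (Fin 3 → ℝ) →ₗ[ℝ] (Fin 3 → ℝ)) : Prop :=
  (∀ x ∈ VdualN n, η x ∈ VposN n) ∧ dot3 uEff (η uEff) = 1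

/-- A binary observable on `Ω_n`: a pair of effects summing to the unit effect. -/
def IsObservable (n : ℕ) (A : (Fin 3 → ℝ) × (Fin 3 → ℝ)) : Prop :=
  A.1 ∈ EffN n ∧ A.2 ∈ EffN n ∧ A.1 + A.2 = uEff

/-- The observable `E_n(i) = (e_n(i), ē_n(i))`. -/
def EObs (n i : ℕ) : (Fin 3 → ℝ) × (Fin 3 → ℝ) := (eN n i, eBarN n i)

/-- The correlator `E(st) = Σ_{a,b} (-1)^{a+b} ⟨B^b, η(A^a)⟩`. -/
def corr (η : (Fin 3 → ℝ) →ₗ[ℝ] (Fin 3 → ℝ)) (A B : (Fin 3 → ℝ) × (Fin 3 → ℝ)) : ℝ :=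
  dot3 B.1 (η A.1) - dot3 B.2 (η A.1) - dot3 B.1 (η A.2) + dot3 B.2 (η A.2)

/-- The CHSH value `C[η; A₀,A₁; B₀,B₁] = E(00) + E(01) + E(10) - E(11)`. -/
def CHSH (η : (Fin 3 → ℝ) →ₗ[ℝ] (Fin 3 → ℝ))
    (A0 A1 B0 B1 : (Fin 3 → ℝ) × (Fin 3 → ℝ)) : ℝ :=
  corr η A0 B0 + corr η A0 B1 + corr η A1 B0 - corr η A1 B1

/-- `GL(Ω_n)`: linear bijections of `ℝ³` preserving the state space. -/
def GLOmega (n : ℕ) : Set ((Fin 3 → ℝ) →ₗ[ℝ] (Fin 3 → ℝ)) :=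
  {T | Function.Bijective T ∧ T '' OmegaN n = OmegaN n}

/-- The order isomorphism `T_n`: a rotation by `θ_n` for even `n`, the identity for odd `n`. -/
def TN (n : ℕ) : (Fin 3 → ℝ) →ₗ[ℝ] (Fin 3 → ℝ) :=
  if Even n then
    Matrix.toLin' !![Real.cos (thetaN n), Real.sin (thetaN n), 0;
                     -Real.sin (thetaN n), Real.cos (thetaN n), 0;
                     0, 0, 1]
  else LinearMap.id

/-- Maximally entangled states: elements of `T_n · GL(Ω_n)`. -/
def MaxEnt (n : ℕ) (η : (Fin 3 → ℝ) →ₗ[ℝ] (Fin 3 → ℝ)) : Prop :=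
  ∃ T ∈ GLOmega n, η = (TN n).comp T

/-- The effect `Q₁⁰ = (0, R_n r_n sin(kθ_n), 1/2)` (rotated coordinates). -/
def Q10 (n k : ℕ) : Fin 3 → ℝ :=
  ![0, RN n * rN n * Real.sin ((k : ℝ) * thetaN n), 1 / 2]

/-- The effect `Q₁¹ = (0, −R_n r_n sin(kθ_n), 1/2)` (rotated coordinates). -/
def Q11 (n k : ℕ) : Fin 3 → ℝ :=
  ![0, -(RN n * rN n * Real.sin ((k : ℝ) * thetaN n)), 1 / 2]

/-- The boundary function `f(x) = −x/tan((2M+1)θ_n) + r_n cos θ_n / sin((2M+1)θ_n)`. -/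
def fBdry (n M : ℕ) (x : ℝ) : ℝ :=
  -x / Real.tan ((2 * (M : ℝ) + 1) * thetaN n)
    + rN n * Real.cos (thetaN n) / Real.sin ((2 * (M : ℝ) + 1) * thetaN n)

lemma cos_odd_le (n : ℕ) (hn : 3 < n) (j : ℤ) (hj : Odd j) :
    Real.cos ((j : ℝ) * thetaN n) ≤ Real.cos (thetaN n) := by
  have hn0 : (0:ℝ) < n := by positivity
  have hθpos : 0 < thetaN n := by unfold thetaN; positivity
  have h2n : (0:ℤ) < 2 * n := by positivity
  set m : ℤ := j % (2 * n) with hm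
  have hm0 : 0 ≤ m := Int.emod_nonneg j (ne_of_gt h2n)
  have hmlt : m < 2 * n := Int.emod_lt_of_pos j h2n
  have hmodd : Odd m := by
    have h2 : (2:ℤ) ∣ 2 * n := ⟨n, rfl⟩
    have := Int.emod_emod_of_dvd j h2
    rw [Int.odd_iff] at hj ⊢
    rw [hm, this, hj]
  have hm1 : 1 ≤ m := by rcases hmodd with ⟨t, ht⟩; omega
  have h2nθ : (2 * (n:ℝ)) * thetaN n = 2 * Real.pi := by
    unfold thetaN; field_simp
  have hcoseq : Real.cos ((j : ℝ) * thetaN n) = Real.cos ((m : ℝ) * thetaN n) := by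
    have key : (j : ℝ) * thetaN n
        = (m : ℝ) * thetaN n + ((j / (2 * n) : ℤ) : ℝ) * (2 * Real.pi) := by
      have hdiv := Int.emod_add_mul_ediv j (2 * n)
      have hj' : (m : ℝ) + 2 * (n:ℝ) * ((j / (2 * n) : ℤ) : ℝ) = (j : ℝ) := by
        exact_mod_cast congrArg (Int.cast : ℤ → ℝ) hdiv
      linear_combination (-(thetaN n)) * hj' + ((j / (2 * n) : ℤ) : ℝ) * h2nθ
    rw [key, Real.cos_add_int_mul_two_pi]
  rw [hcoseq]
  have hm1' : (1:ℝ) ≤ (m:ℝ) := by exact_mod_cast hm1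
  have hmlt' : (m:ℝ) ≤ 2 * (n:ℝ) - 1 := by
    have hZ : m ≤ 2 * (n:ℤ) - 1 := by omega
    exact_mod_cast hZ
  have hθm : thetaN n ≤ (m : ℝ) * thetaN n := by nlinarith
  have hub : (m : ℝ) * thetaN n ≤ 2 * Real.pi - thetaN n := by nlinarith
  rcases le_or_gt ((m : ℝ) * thetaN n) Real.pi with hcase | hcase
  · exact Real.cos_le_cos_of_nonneg_of_le_pi hθpos.le hcase hθm
  · have : Real.cos ((m : ℝ) * thetaN n) = Real.cos (2 * Real.pi - (m : ℝ) * thetaN n) := by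
      rw [Real.cos_two_pi_sub]
    rw [this]
    apply Real.cos_le_cos_of_nonneg_of_le_pi hθpos.le <;> linarith

lemma fBdry_eq (n M : ℕ) (x : ℝ) :
    fBdry n M x = (-x * Real.cos ((2 * (M:ℝ) + 1) * thetaN n)
        + rN n * Real.cos (thetaN n)) / Real.sin ((2 * (M:ℝ) + 1) * thetaN n) := by
  unfold fBdry
  rw [Real.tan_eq_sin_div_cos, div_div_eq_mul_div, ← add_div]

lemma sinA_pos (n : ℕ) (hodd : Odd n) (hn : 3 < n) (M : ℕ) (hM : M ≤ (n - 3) / 2) :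
    0 < Real.sin ((2 * (M:ℝ) + 1) * thetaN n) := by
  have hn0 : (0:ℝ) < n := by positivity
  have hθpos : 0 < thetaN n := by unfold thetaN; positivity
  have h1 : 2 * M + 1 ≤ n - 2 := by omega
  have h2 : (2 * (M:ℝ) + 1) ≤ (n:ℝ) - 2 := by
    have : ((2 * M + 1 : ℕ) : ℝ) ≤ ((n - 2 : ℕ) : ℝ) := by exact_mod_cast h1
    push_cast at this
    rw [Nat.cast_sub (by omega)] at this
    push_cast at this
    linarith
  apply Real.sin_pos_of_pos_of_lt_pi
  · positivity
  · have : (2 * (M:ℝ) + 1) * thetaN n < (n:ℝ) * thetaN n := by nlinarith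
    have hnθ : (n:ℝ) * thetaN n = Real.pi := by unfold thetaN; field_simp
    linarith [this, hnθ]

lemma omega_bound (n : ℕ) (hodd : Odd n) (hn : 3 < n) (M : ℕ) (hM : M ≤ (n - 3) / 2)
    (w : Fin 3 → ℝ) (hw : w ∈ OmegaN n) :
    w 2 = 1 ∧ w 1 ≤ fBdry n M (w 0) ∧ -(w 1) ≤ fBdry n M (w 0) := by
  set a : ℝ := (2 * (M:ℝ) + 1) * thetaN n with ha
  have hs : 0 < Real.sin a := sinA_pos n hodd hn M hM
  have hr : 0 ≤ rN n := Real.sqrt_nonneg _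
  set S : Set (Fin 3 → ℝ) :=
    {v | v 2 = 1 ∧ v 1 ≤ fBdry n M (v 0) ∧ -(v 1) ≤ fBdry n M (v 0)} with hS
  have hconv : Convex ℝ S := by
    intro u hu v hv p q hp hq hpq
    obtain ⟨hu2, hu1, hu1'⟩ := hu
    obtain ⟨hv2, hv1, hv1'⟩ := hv
    rw [fBdry_eq, ← ha, le_div_iff₀ hs] at hu1 hv1 hu1' hv1'
    refine ⟨?_, ?_, ?_⟩
    · simp only [Pi.add_apply, Pi.smul_apply, smul_eq_mul, hu2, hv2]; linarith
    · simp only [Set.mem_setOf_eq, Pi.add_apply, Pi.smul_apply, smul_eq_mul]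
      rw [fBdry_eq, ← ha, le_div_iff₀ hs]
      have hC : p * (rN n * Real.cos (thetaN n)) + q * (rN n * Real.cos (thetaN n))
          = rN n * Real.cos (thetaN n) := by rw [← add_mul, hpq, one_mul]
      linarith [mul_le_mul_of_nonneg_left hu1 hp, mul_le_mul_of_nonneg_left hv1 hq, hC]
    · simp only [Set.mem_setOf_eq, Pi.add_apply, Pi.smul_apply, smul_eq_mul]
      rw [fBdry_eq, ← ha, le_div_iff₀ hs]
      have hC : p * (rN n * Real.cos (thetaN n)) + q * (rN n * Real.cos (thetaN n))
          = rN n * Real.cos (thetaN n) := by rw [← add_mul, hpq, one_mul]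
      linarith [mul_le_mul_of_nonneg_left hu1' hp, mul_le_mul_of_nonneg_left hv1' hq, hC]
  have hgen : {v | ∃ i < n, v = omegaN n i} ⊆ S := by
    rintro v ⟨i, hi, rfl⟩
    refine ⟨by simp [omegaN], ?_, ?_⟩
    · simp only [omegaN]
      simp only [Matrix.cons_val_zero, Matrix.cons_val_one, Matrix.head_cons]
      rw [fBdry_eq, ← ha, le_div_iff₀ hs]
      have key := cos_odd_le n hn (2 * (i:ℤ) - (2 * M + 1)) (by exact ⟨i - M - 1, by ring⟩)
      have harg : ((2 * (i:ℤ) - (2 * M + 1) : ℤ) : ℝ) * thetaN n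
          = 2 * (i:ℝ) * thetaN n - a := by push_cast; ring
      rw [harg, Real.cos_sub] at key
      nlinarith [mul_le_mul_of_nonneg_left key hr]
    · simp only [omegaN]
      simp only [Matrix.cons_val_zero, Matrix.cons_val_one, Matrix.head_cons]
      rw [fBdry_eq, ← ha, le_div_iff₀ hs]
      have key := cos_odd_le n hn (2 * (i:ℤ) + (2 * M + 1)) (by exact ⟨i + M, by ring⟩)
      have harg : ((2 * (i:ℤ) + (2 * M + 1) : ℤ) : ℝ) * thetaN n
          = 2 * (i:ℝ) * thetaN n + a := by push_cast; ring
      rw [harg, Real.cos_add] at key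
      nlinarith [mul_le_mul_of_nonneg_left key hr]
  exact convexHull_min hgen hconv hw

/-- bounds for `S₁ = p⟨Q₁⁰, ω⁰⟩ + (1−p)⟨Q₁¹, ω¹⟩` in terms of the first
coordinate `x` of `pω⁰ + (1−p)ω¹` when `x` lies in
`[r_n cos((2M+2)θ_n), r_n cos(2Mθ_n)]`. -/
theorem S1_bounds (n : ℕ) (hodd : Odd n) (hn : 3 < n)
    (k : ℕ) (hk : k ≤ (n - 1) / 2) (M : ℕ) (hM : M ≤ (n - 3) / 2)
    (p : ℝ) (hp : p ∈ Set.Icc (0 : ℝ) 1)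
    (w0 w1 : Fin 3 → ℝ) (hw0 : w0 ∈ OmegaN n) (hw1 : w1 ∈ OmegaN n)
    (hx : (p • w0 + (1 - p) • w1) 0 ∈
      Set.Icc (rN n * Real.cos ((2 * (M : ℝ) + 2) * thetaN n))
              (rN n * Real.cos (2 * (M : ℝ) * thetaN n))) :
    1 / 2 - RN n * rN n * Real.sin ((k : ℝ) * thetaN n)
        * fBdry n M ((p • w0 + (1 - p) • w1) 0)
      ≤ p * dot3 (Q10 n k) w0 + (1 - p) * dot3 (Q11 n k) w1 ∧
    p * dot3 (Q10 n k) w0 + (1 - p) * dot3 (Q11 n k) w1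
      ≤ 1 / 2 + RN n * rN n * Real.sin ((k : ℝ) * thetaN n)
          * fBdry n M ((p • w0 + (1 - p) • w1) 0) := by
  obtain ⟨hp0, hp1⟩ := hp
  have hq0 : (0:ℝ) ≤ 1 - p := by linarith
  obtain ⟨h02, h0u, h0l⟩ := omega_bound n hodd hn M hM w0 hw0
  obtain ⟨h12, h1u, h1l⟩ := omega_bound n hodd hn M hM w1 hw1
  have hn0 : (0:ℝ) < n := by positivity
  have hc : 0 ≤ RN n * rN n * Real.sin ((k : ℝ) * thetaN n) := by
    have hR : 0 ≤ RN n := by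
      unfold RN; positivity
    have hr : 0 ≤ rN n := Real.sqrt_nonneg _
    have hsin : 0 ≤ Real.sin ((k : ℝ) * thetaN n) := by
      apply Real.sin_nonneg_of_nonneg_of_le_pi
      · have : (0:ℝ) ≤ (k:ℝ) := by positivity
        have : 0 < thetaN n := by unfold thetaN; positivity
        positivity
      · have hkn : (k:ℝ) ≤ (n:ℝ) := by exact_mod_cast Nat.le_of_lt (by omega : k < n)
        have hnθ : (n:ℝ) * thetaN n = Real.pi := by unfold thetaN; field_simp
        have hθ : 0 < thetaN n := by unfold thetaN; positivity
        nlinarith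
    positivity
  have hdot0 : dot3 (Q10 n k) w0
      = RN n * rN n * Real.sin ((k : ℝ) * thetaN n) * w0 1 + 1 / 2 := by
    simp [dot3, Fin.sum_univ_three, Q10, h02]
  have hdot1 : dot3 (Q11 n k) w1
      = -(RN n * rN n * Real.sin ((k : ℝ) * thetaN n)) * w1 1 + 1 / 2 := by
    simp [dot3, Fin.sum_univ_three, Q11, h12]
  have hx0 : (p • w0 + (1 - p) • w1) 0 = p * w0 0 + (1 - p) * w1 0 := by
    simp
  have hfx : fBdry n M (p * w0 0 + (1 - p) * w1 0)
      = p * fBdry n M (w0 0) + (1 - p) * fBdry n M (w1 0) := by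
    simp only [fBdry]; ring
  rw [hdot0, hdot1, hx0, hfx]
  constructor
  · nlinarith [mul_le_mul_of_nonneg_left h0l (mul_nonneg hc hp0),
      mul_le_mul_of_nonneg_left h1u (mul_nonneg hc hq0)]
  · nlinarith [mul_le_mul_of_nonneg_left h0u (mul_nonneg hc hp0),
      mul_le_mul_of_nonneg_left h1l (mul_nonneg hc hq0)]
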